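/- Let G be a finite graph and v a vertex of G. Then v lies on some hole of G if and only if there exist two nonadjacent vertices u, w in the neighborhood N(v) of v and a path from u to w in G all of whose internal vertices lie outside the closed neighborhood N[v] = N(v) ∪ {v}. -/

import Mathlib

open SimpleGraph Walk
open scoped Fin.NatCast Fin.CommRing

namespace HoleAux

variable {V : Type*} {G : SimpleGraph V}

lemma getVert_mem_support' {u w : V} (p : G.Walk u w) {i : ℕ} (hi : i ≤ p.length) :
    p.getVert i ∈ p.support :=
  Walk.mem_support_iff_exists_getVert.2 ⟨i, rfl, hi⟩

lemma getVert_injOn {u w : V} {p : G.Walk u w} (hp : p.IsPath) :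
    ∀ i j, i ≤ p.length → j ≤ p.length → p.getVert i = p.getVert j → i = j := by
  induction p with
  | nil => intro i j hi hj _; simp only [Walk.length_nil, Nat.le_zero] at hi hj; omega
  | cons h q ih =>
    rw [Walk.cons_isPath_iff] at hp
    intro i j hi hj heq
    match i, j with
    | 0, 0 => rfl
    | 0, j + 1 =>
      exfalso
      apply hp.2
      simp only [Walk.getVert_zero, Walk.getVert_cons_succ] at heq
      rw [heq]
      exact getVert_mem_support' q (by simpa using hj)
    | i + 1, 0 =>
      exfalso
      apply hp.2
      simp only [Walk.getVert_zero, Walk.getVert_cons_succ] at heq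
      rw [← heq]
      exact getVert_mem_support' q (by simpa using hi)
    | i + 1, j + 1 =>
      simp only [Walk.getVert_cons_succ] at heq
      have := ih hp.1 i j (by simpa using hi) (by simpa using hj) heq
      omega

lemma exists_drop {u w : V} (p : G.Walk u w) : ∀ b ≤ p.length,
    ∃ q : G.Walk (p.getVert b) w, q.length = p.length - b ∧
      ∀ x ∈ q.support, x ∈ p.support := by
  induction p with
  | nil =>
    intro b hb
    simp only [Walk.length_nil, Nat.le_zero] at hb
    subst hb
    exact ⟨Walk.nil, by simp, by simp⟩
  | cons h q ih =>
    intro b hb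
    match b with
    | 0 => exact ⟨Walk.cons h q, (Nat.sub_zero _).symm, fun x hx => hx⟩
    | b + 1 =>
      obtain ⟨r, hl, hs⟩ := ih b (by simpa using hb)
      exact ⟨r, by simp [hl], fun x hx => by
        simp only [Walk.support_cons, List.mem_cons]; exact Or.inr (hs x hx)⟩

lemma exists_take {u w : V} (p : G.Walk u w) : ∀ a ≤ p.length,
    ∃ q : G.Walk u (p.getVert a), q.length = a ∧
      ∀ x ∈ q.support, x ∈ p.support := by
  induction p with
  | nil =>
    intro a ha
    simp only [Walk.length_nil, Nat.le_zero] at ha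
    subst ha
    exact ⟨Walk.nil, by simp, by simp⟩
  | cons h q ih =>
    intro a ha
    match a with
    | 0 => exact ⟨Walk.nil, rfl, fun x hx => by
        rw [List.mem_singleton.mp hx]; exact Walk.start_mem_support _⟩
    | a + 1 =>
      obtain ⟨r, hl, hs⟩ := ih a (by simpa using ha)
      exact ⟨Walk.cons h r, by simp [hl], fun x hx => by
        simp only [Walk.support_cons, List.mem_cons] at hx ⊢
        rcases List.mem_cons.mp hx with hx | hx
        · exact Or.inl hx
        · exact Or.inr (hs x hx)⟩

lemma cycle_walk {n : ℕ} [NeZero n] (hn : 2 ≤ n) (i : Fin n) :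
    ∀ k : ℕ, 1 ≤ k → k ≤ n - 1 →
    ∃ W : (SimpleGraph.cycleGraph n).Walk (i + 1) (i + (k : Fin n)),
      ∀ x ∈ W.support, ∃ j : ℕ, 1 ≤ j ∧ j ≤ k ∧ x = i + (j : Fin n) := by
  intro k
  induction k with
  | zero => omega
  | succ k ih =>
    intro _ hk
    rcases Nat.eq_or_lt_of_le (show 1 ≤ k + 1 from by omega) with h1 | h1
    · -- k + 1 = 1
      have hk0 : k = 0 := by omega
      subst hk0
      refine ⟨Walk.nil.copy rfl (by norm_num), ?_⟩
      intro x hx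
      simp only [Walk.support_copy, Walk.support_nil, List.mem_singleton] at hx
      exact ⟨1, le_refl _, le_refl _, by rw [hx]; norm_num⟩
    · obtain ⟨W, hW⟩ := ih (by omega) (by omega)
      have hadj : (SimpleGraph.cycleGraph n).Adj (i + (k : Fin n)) (i + ((k + 1 : ℕ) : Fin n)) := by
        rw [SimpleGraph.cycleGraph_adj']
        right
        have : (i + ((k + 1 : ℕ) : Fin n)) - (i + (k : Fin n)) = 1 := by push_cast; ring
        rw [this]
        rw [show (1 : Fin n) = ((1 : ℕ) : Fin n) by norm_num]
        rw [Fin.val_cast_of_lt (by omega)]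
      refine ⟨W.concat hadj, ?_⟩
      intro x hx
      rw [Walk.support_concat] at hx
      rw [List.mem_append] at hx
      rcases hx with hx | hx
      · obtain ⟨j, h1j, hjk, rfl⟩ := hW x hx
        exact ⟨j, h1j, by omega, rfl⟩
      · rw [List.mem_singleton] at hx
        exact ⟨k + 1, by omega, le_refl _, hx⟩

end HoleAux

/-- A hole of a graph `G`: the vertex set of an induced cycle of `G` on at least four
vertices. -/
def IsHole {V : Type} (G : SimpleGraph V) (X : Set V) : Prop :=
  ∃ n : ℕ, 4 ≤ n ∧ Nonempty (G.induce X ≃g SimpleGraph.cycleGraph n)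

/-- A vertex `v` of a finite graph `G` lies on some hole of `G` if and
only if there are two distinct nonadjacent vertices `u, w ∈ N(v)` and a path from `u` to
`w` in `G` all of whose internal vertices lie outside the closed neighborhood
`N[v] = N(v) ∪ {v}`. -/
theorem mem_hole_iff_path_outside_closed_nbhd
    {V : Type} [Fintype V] (G : SimpleGraph V) (v : V) :
    (∃ X : Set V, IsHole G X ∧ v ∈ X) ↔
      ∃ u w : V, u ∈ G.neighborSet v ∧ w ∈ G.neighborSet v ∧ u ≠ w ∧ ¬ G.Adj u w ∧
        ∃ p : G.Walk u w, p.IsPath ∧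
          ∀ x ∈ p.support, x ≠ u → x ≠ w → x ∉ insert v (G.neighborSet v) := by
  classical
  constructor
  · rintro ⟨X, ⟨n, hn4, ⟨e⟩⟩, hvX⟩
    obtain ⟨m, rfl⟩ : ∃ m, n = m + 2 := ⟨n - 2, by omega⟩
    have hm : 2 ≤ m := by omega
    haveI : NeZero (m + 2) := ⟨by omega⟩
    set i : Fin (m + 2) := e ⟨v, hvX⟩ with hi
    have key : ∀ x y : Fin (m + 2), G.Adj ((e.symm x : X) : V) ((e.symm y : X) : V) ↔
        (SimpleGraph.cycleGraph (m + 2)).Adj x y := by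
      intro x y
      exact (SimpleGraph.comap_adj).symm.trans e.symm.map_adj_iff
    have cadj : ∀ x y : Fin (m + 2),
        (SimpleGraph.cycleGraph (m + 2)).Adj x y ↔ x - y = 1 ∨ y - x = 1 := by
      intro x y; exact SimpleGraph.cycleGraph_adj
    have hsv : e.symm i = (⟨v, hvX⟩ : X) := by rw [hi]; exact e.symm_apply_apply _
    have hsvv : ((e.symm i : X) : V) = v := by rw [hsv]
    have hdvd : ∀ a : ℕ, ((a : ℕ) : Fin (m + 2)) = 0 → m + 2 ≤ a ∨ a = 0 := by
      intro a h
      have := Fin.natCast_eq_zero.mp h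
      rcases Nat.eq_zero_or_pos a with h0 | h0
      · exact Or.inr h0
      · exact Or.inl (Nat.le_of_dvd h0 this)
    refine ⟨((e.symm (i + 1) : X) : V), ((e.symm (i - 1) : X) : V), ?_, ?_, ?_, ?_, ?_⟩
    · rw [SimpleGraph.mem_neighborSet, ← hsvv, key, cadj]
      right; ring_nf
    · rw [SimpleGraph.mem_neighborSet, ← hsvv, key, cadj]
      left; ring_nf
    · intro h
      have h2 : i + 1 = i - 1 := e.symm.injective (Subtype.coe_injective h)
      have h3 : ((2 : ℕ) : Fin (m + 2)) = 0 := by push_cast; linear_combination h2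
      rcases hdvd 2 h3 with h4 | h4 <;> omega
    · intro h
      rw [key, cadj] at h
      rcases h with h | h
      · have h3 : ((1 : ℕ) : Fin (m + 2)) = 0 := by push_cast; linear_combination h
        rcases hdvd 1 h3 with h4 | h4 <;> omega
      · have h3 : ((3 : ℕ) : Fin (m + 2)) = 0 := by push_cast; linear_combination -h
        rcases hdvd 3 h3 with h4 | h4 <;> omega
    · -- the walk
      have hm1 : ((m + 1 : ℕ) : Fin (m + 2)) = -1 := by
        have h0 : ((m + 2 : ℕ) : Fin (m + 2)) = 0 := Fin.natCast_self _
        push_cast at h0 ⊢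
        linear_combination h0
      obtain ⟨W, hWs⟩ := HoleAux.cycle_walk (show 2 ≤ m + 2 by omega) i (m + 1)
        (by omega) (by omega)
      have hend : i + ((m + 1 : ℕ) : Fin (m + 2)) = i - 1 := by
        rw [hm1]; ring
      let hom : SimpleGraph.cycleGraph (m + 2) →g G :=
        (SimpleGraph.Embedding.induce X).toHom.comp e.symm.toHom
      have homap : ∀ x : Fin (m + 2), hom x = ((e.symm x : X) : V) := fun x => rfl
      let W' := W.copy rfl hend
      have hW's : W'.support = W.support := Walk.support_copy _ _ _
      let p0 := (W'.map hom).copy (homap (i + 1)) (homap (i - 1))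
      have hp0s : ∀ x ∈ p0.support, ∃ z ∈ W.support, hom z = x := by
        intro x hx
        rw [Walk.support_copy, Walk.support_map] at hx
        obtain ⟨z, hz, rfl⟩ := List.mem_map.mp hx
        rw [hW's] at hz
        exact ⟨z, hz, rfl⟩
      refine ⟨p0.bypass, Walk.bypass_isPath _, ?_⟩
      intro x hx hxu hxw
      obtain ⟨z, hz, rfl⟩ := hp0s x (Walk.support_bypass_subset _ hx)
      obtain ⟨j, h1j, hjm, rfl⟩ := hWs z hz
      simp only [Set.mem_insert_iff, SimpleGraph.mem_neighborSet]
      rintro (h | h)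
      · rw [homap] at h
        have h2 : e.symm (i + (j : Fin (m + 2))) = (⟨v, hvX⟩ : X) := Subtype.ext h
        have h3 : i + (j : Fin (m + 2)) = i := by
          apply e.symm.injective
          rw [h2, ← hsv]
        have h4 : ((j : ℕ) : Fin (m + 2)) = 0 := by
          linear_combination h3
        rcases hdvd j h4 with h5 | h5 <;> omega
      · rw [homap, ← hsvv, key, cadj] at h
        rcases h with h | h
        · apply hxw
          rw [homap]
          have h9 : i + (j : Fin (m + 2)) = i - 1 := by linear_combination -h
          rw [h9]
        · apply hxu
          rw [homap]
          have h9 : i + (j : Fin (m + 2)) = i + 1 := by linear_combination h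
          rw [h9]
  · rintro ⟨u, w, hu, hw, huw, hnadj, p, hp, hsup⟩
    rw [SimpleGraph.mem_neighborSet] at hu hw
    have hCp : ∀ x ∈ p.support, x ≠ u → x ≠ w → x ≠ v ∧ ¬ G.Adj v x := by
      intro x hx h1 h2
      have := hsup x hx h1 h2
      simp only [Set.mem_insert_iff, SimpleGraph.mem_neighborSet] at this
      push_neg at this
      exact this
    set S : Set ℕ := {mm | ∃ q : G.Walk u w,
      (q.IsPath ∧ ∀ x ∈ q.support, x ≠ u → x ≠ w → x ≠ v ∧ ¬ G.Adj v x) ∧ q.length = mm}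
      with hS
    have hSne : S.Nonempty := ⟨p.length, p, ⟨hp, hCp⟩, rfl⟩
    obtain ⟨q, ⟨hqp, hqc⟩, hqlen⟩ := Nat.sInf_mem hSne
    have hmin : ∀ q' : G.Walk u w, q'.IsPath →
        (∀ x ∈ q'.support, x ≠ u → x ≠ w → x ≠ v ∧ ¬ G.Adj v x) → sInf S ≤ q'.length :=
      fun q' h1 h2 => Nat.sInf_le ⟨q', ⟨h1, h2⟩, rfl⟩
    have hind : ∀ a b : ℕ, a + 1 < b → b ≤ q.length → ¬ G.Adj (q.getVert a) (q.getVert b) := by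
      intro a b hab hb hadj
      obtain ⟨q1, hl1, hs1⟩ := HoleAux.exists_take q a (by omega)
      obtain ⟨q2, hl2, hs2⟩ := HoleAux.exists_drop q b hb
      set s := q1.append (Walk.cons hadj q2) with hsdef
      have hss : ∀ x ∈ s.support, x ∈ q.support := by
        intro x hx
        rw [hsdef, Walk.mem_support_append_iff] at hx
        rcases hx with hx | hx
        · exact hs1 x hx
        · rw [Walk.support_cons, List.mem_cons] at hx
          rcases hx with rfl | hx
          · exact HoleAux.getVert_mem_support' q (by omega)
          · exact hs2 x hx
      have hlen : s.length = a + 1 + (q.length - b) := by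
        rw [hsdef, Walk.length_append, Walk.length_cons, hl1, hl2]
        omega
      have h1 := hmin s.bypass (Walk.bypass_isPath s)
        (fun x hx h1 h2 => hqc x (hss x (Walk.support_bypass_subset s hx)) h1 h2)
      have h2 := Walk.length_bypass_le s
      omega
    have hvu : v ≠ u := fun h => by rw [h] at hu; exact G.irrefl hu
    have hvw : v ≠ w := fun h => by rw [h] at hw; exact G.irrefl hw
    have hvq : v ∉ q.support := fun h => (hqc v h hvu hvw).1 rfl
    have hne0 : q.length ≠ 0 := by
      intro h0
      apply huw
      have h2 : q.getVert 0 = q.getVert q.length := by rw [h0]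
      rwa [Walk.getVert_zero, Walk.getVert_length] at h2
    have hne1 : q.length ≠ 1 := by
      intro h1
      apply hnadj
      have h2 := q.adj_getVert_succ (i := 0) (by omega)
      rwa [Walk.getVert_zero, show (0 + 1) = q.length from h1.symm, Walk.getVert_length] at h2
    have hlq2 : 2 ≤ q.length := by omega
    set X : Set V := insert v {x | x ∈ q.support} with hX
    have hXv : v ∈ X := Set.mem_insert _ _
    let f : Fin (q.length + 2) → X := fun k =>
      if h : (k : ℕ) = 0 then ⟨v, Set.mem_insert _ _⟩
      else ⟨q.getVert ((k : ℕ) - 1),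
        Set.mem_insert_of_mem _ (HoleAux.getVert_mem_support' q (by have := k.isLt; omega))⟩
    have hf0 : ∀ k : Fin (q.length + 2), (k : ℕ) = 0 → (f k : V) = v := by
      intro k hk
      simp only [f]
      rw [dif_pos hk]
    have hfs : ∀ k : Fin (q.length + 2), (k : ℕ) ≠ 0 → (f k : V) = q.getVert ((k : ℕ) - 1) := by
      intro k hk
      simp only [f]
      rw [dif_neg hk]
    have hinj : Function.Injective f := by
      intro k1 k2 h
      have hval : (f k1 : V) = (f k2 : V) := congrArg _ h
      have hk1 := k1.isLt
      have hk2 := k2.isLt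
      by_cases h1 : (k1 : ℕ) = 0 <;> by_cases h2 : (k2 : ℕ) = 0
      · exact Fin.ext (by omega)
      · exfalso
        rw [hf0 k1 h1, hfs k2 h2] at hval
        exact hvq (by rw [hval]; exact HoleAux.getVert_mem_support' q (by omega))
      · exfalso
        rw [hfs k1 h1, hf0 k2 h2] at hval
        exact hvq (by rw [← hval]; exact HoleAux.getVert_mem_support' q (by omega))
      · rw [hfs k1 h1, hfs k2 h2] at hval
        have := HoleAux.getVert_injOn hqp _ _
          (show (k1 : ℕ) - 1 ≤ q.length by omega) (show (k2 : ℕ) - 1 ≤ q.length by omega) hval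
        exact Fin.ext (by omega)
    have hsurj : Function.Surjective f := by
      rintro ⟨x, hx⟩
      rcases hx with rfl | hx
      · exact ⟨0, Subtype.ext (hf0 0 rfl)⟩
      · obtain ⟨mm, hml, hmm⟩ := Walk.mem_support_iff_exists_getVert.mp hx
        refine ⟨⟨mm + 1, by omega⟩, Subtype.ext ?_⟩
        rw [hfs _ (by simp)]
        simpa using hml
    have A1 : ∀ t, t ≤ q.length → (G.Adj v (q.getVert t) ↔ (t = 0 ∨ t = q.length)) := by
      intro t ht
      constructor
      · intro hadj
        by_contra hcon
        push_neg at hcon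
        have hxs := HoleAux.getVert_mem_support' q ht
        have hxu : q.getVert t ≠ u := by
          intro h
          exact hcon.1 (HoleAux.getVert_injOn hqp t 0 ht (by omega)
            (by rw [h, Walk.getVert_zero]))
        have hxw : q.getVert t ≠ w := by
          intro h
          exact hcon.2 (HoleAux.getVert_injOn hqp t q.length ht (le_refl _)
            (by rw [h, Walk.getVert_length]))
        exact (hqc _ hxs hxu hxw).2 hadj
      · rintro (rfl | rfl)
        · rw [Walk.getVert_zero]; exact hu
        · rw [Walk.getVert_length]; exact hw
    have A2 : ∀ s t, s ≤ q.length → t ≤ q.length →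
        (G.Adj (q.getVert s) (q.getVert t) ↔ (s = t + 1 ∨ t = s + 1)) := by
      intro s t hs ht
      constructor
      · intro hadj
        by_contra hcon
        push_neg at hcon
        have hst : s ≠ t := by
          intro h; rw [h] at hadj; exact G.irrefl hadj
        rcases Nat.lt_or_ge s t with h | h
        · exact hind s t (by omega) ht hadj
        · exact hind t s (by omega) hs hadj.symm
      · rintro (rfl | rfl)
        · exact (q.adj_getVert_succ (by omega)).symm
        · exact q.adj_getVert_succ (by omega)
    have hmadj : ∀ a b : Fin (q.length + 2),
        (G.induce X).Adj (f a) (f b) ↔ (SimpleGraph.cycleGraph (q.length + 2)).Adj a b := by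
      intro a b
      have ha := a.isLt
      have hb := b.isLt
      have e1 : ∀ x y : Fin (q.length + 2), x - y = 1 ↔
          ((x : ℕ) = (y : ℕ) + 1 ∨ ((y : ℕ) = q.length + 1 ∧ (x : ℕ) = 0)) := by
        intro x y
        rw [sub_eq_iff_eq_add, Fin.ext_iff, Fin.val_add]
        have h1 : ((1 : Fin (q.length + 2)) : ℕ) = 1 := by
          rw [show (1 : Fin (q.length + 2)) = ((1 : ℕ) : Fin (q.length + 2)) by norm_num,
            Fin.val_cast_of_lt (by omega)]
        rw [h1]
        have hx := x.isLt
        have hy := y.isLt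
        rcases Nat.lt_or_ge ((y : ℕ) + 1) (q.length + 2) with hc | hc
        · rw [Nat.mod_eq_of_lt (by omega)]
          omega
        · have h9 : (1 + (y : ℕ)) = q.length + 2 := by omega
          rw [h9, Nat.mod_self]
          omega
      have hrhs : (SimpleGraph.cycleGraph (q.length + 2)).Adj a b ↔
          ((a : ℕ) = (b : ℕ) + 1 ∨ (b : ℕ) = (a : ℕ) + 1 ∨
            ((a : ℕ) = 0 ∧ (b : ℕ) = q.length + 1) ∨
            ((b : ℕ) = 0 ∧ (a : ℕ) = q.length + 1)) := by
        rw [SimpleGraph.cycleGraph_adj, e1 a b, e1 b a]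
        constructor
        · intro h; omega
        · intro h; omega
      rw [hrhs]
      have hlhs : (G.induce X).Adj (f a) (f b) ↔ G.Adj ((f a : X) : V) ((f b : X) : V) :=
        SimpleGraph.comap_adj
      rw [hlhs]
      by_cases h1 : (a : ℕ) = 0 <;> by_cases h2 : (b : ℕ) = 0
      · rw [hf0 a h1, hf0 b h2]
        constructor
        · intro h; exact (G.irrefl h).elim
        · intro h; exfalso; omega
      · rw [hf0 a h1, hfs b h2, A1 _ (by omega)]
        omega
      · rw [hfs a h1, hf0 b h2, G.adj_comm, A1 _ (by omega)]
        omega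
      · rw [hfs a h1, hfs b h2, A2 _ _ (by omega) (by omega)]
        omega
    refine ⟨X, ⟨q.length + 2, by omega,
      ⟨SimpleGraph.Iso.symm ⟨Equiv.ofBijective f ⟨hinj, hsurj⟩, ?_⟩⟩⟩, hXv⟩
    intro a b
    exact hmadj a b
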